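/- Let λ₁ be a rotationally invariant positive measure on the star S₀ whose restriction to [0,α] is s₁(x)dx, and let π_n be its n-th monic orthogonal polynomial. Then π_n(e^{2πi/3}z) = e^{2πin/3}π_n(z), and consequently π_{3k}(τ^{1/3}), π_{3k+1}(τ^{1/3})/τ^{1/3}, and π_{3k+2}(τ^{1/3})/τ^{2/3} are the monic orthogonal polynomials of degree k with respect to the measures s₁(τ^{1/3})τ^{-2/3}dτ, s₁(τ^{1/3})dτ, and s₁(τ^{1/3})τ^{2/3}dτ on [0,α³], respectively. -/

import Mathlib

open Complex Finset intervalIntegral Polynomial MeasureTheory Set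

noncomputable section

/-- The primitive cube root of unity `e^{2πi/3}`. -/
def ω : ℂ := Complex.exp (2 * Real.pi * Complex.I / 3)

/-- The real cube root. -/
def rcbrt (x : ℝ) : ℝ := Real.sign x * |x| ^ ((1 : ℝ) / 3)

lemma omega_pow_three : ω ^ 3 = 1 := by
  rw [ω, ← Complex.exp_nat_mul]
  have : (3 : ℕ) * (2 * (Real.pi : ℂ) * Complex.I / 3) = 2 * Real.pi * Complex.I := by
    push_cast; ring
  rw [this, Complex.exp_two_pi_mul_I]

lemma omega_ne_zero : ω ≠ 0 := Complex.exp_ne_zero _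

lemma omega_ne_one : ω ≠ 1 := by
  intro h
  rw [ω, Complex.exp_eq_one_iff] at h
  obtain ⟨n, hn⟩ := h
  have h2 : (2 * (Real.pi:ℂ) * Complex.I) * (1 - 3 * n) = 0 := by
    linear_combination 3 * hn
  have hpi : (2 * (Real.pi:ℂ) * Complex.I) ≠ 0 := by
    simp [Real.pi_ne_zero, Complex.I_ne_zero]
  have h3 : (1 - 3 * (n:ℂ)) = 0 := by
    rcases mul_eq_zero.mp h2 with h | h
    · exact absurd h hpi
    · exact h
  have h4 : ((1 - 3 * n : ℤ) : ℂ) = 0 := by push_cast; linear_combination h3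
  have := Int.cast_injective (α := ℂ) (h4.trans (Int.cast_zero).symm)
  omega

lemma omega_sq_ne_one : ω ^ 2 ≠ 1 := by
  intro h
  have heq : ω ^ 2 = Complex.exp (2 * (2 * Real.pi * Complex.I / 3)) := by
    rw [ω, ← Complex.exp_nat_mul]; norm_num
  rw [heq, Complex.exp_eq_one_iff] at h
  obtain ⟨n, hn⟩ := h
  have h2 : (2 * (Real.pi:ℂ) * Complex.I) * (2 - 3 * n) = 0 := by
    linear_combination 3 * hn
  have hpi : (2 * (Real.pi:ℂ) * Complex.I) ≠ 0 := by
    simp [Real.pi_ne_zero, Complex.I_ne_zero]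
  have h3 : (2 - 3 * (n:ℂ)) = 0 := by
    rcases mul_eq_zero.mp h2 with h | h
    · exact absurd h hpi
    · exact h
  have h4 : ((2 - 3 * n : ℤ) : ℂ) = 0 := by push_cast; linear_combination h3
  have := Int.cast_injective (α := ℂ) (h4.trans (Int.cast_zero).symm)
  omega

lemma conj_omega : (starRingEnd ℂ) ω = ω ^ 2 := by
  have h1 : (starRingEnd ℂ) ω = Complex.exp (-(2 * Real.pi * Complex.I / 3)) := by
    rw [ω, ← Complex.exp_conj]
    congr 1
    simp only [map_div₀, map_mul, Complex.conj_I, Complex.conj_ofReal, map_ofNat]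
    ring
  have h2 : (starRingEnd ℂ) ω * ω = 1 := by
    rw [h1, ω, ← Complex.exp_add]; simp
  have h3 : ω ^ 2 * ω = 1 := by
    rw [← pow_succ, omega_pow_three]
  exact mul_right_cancel₀ omega_ne_zero (h2.trans h3.symm)

lemma omega_pow_mod (m : ℕ) : ω ^ m = ω ^ (m % 3) := by
  conv_lhs => rw [← Nat.div_add_mod m 3, pow_add, pow_mul, omega_pow_three, one_pow, one_mul]

lemma omega_pow_eq_one {m : ℕ} (h : 3 ∣ m) : ω ^ m = 1 := by
  have hm : m % 3 = 0 := by omega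
  rw [omega_pow_mod, hm, pow_zero]

lemma omega_pow_inj {a b : ℕ} (ha : a < 3) (hb : b < 3) (h : ω ^ a = ω ^ b) : a = b := by
  have h1 := omega_ne_one
  have h2 := omega_sq_ne_one
  have h3 : ω ≠ ω ^ 2 := by
    intro hc
    exact h1 (mul_left_cancel₀ omega_ne_zero
      (show ω * 1 = ω * ω by rw [mul_one, ← sq, ← hc])).symm
  interval_cases a <;> interval_cases b <;>
    simp only [pow_zero, pow_one] at h ⊢ <;>
    first
    | rfl
    | exact absurd h.symm h1
    | exact absurd h.symm h2
    | exact absurd h h3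
    | exact absurd h h1
    | exact absurd h h2
    | exact absurd h.symm h3

lemma coeff_comp_C_mul_X (p : Polynomial ℂ) (a : ℂ) (m : ℕ) :
    (p.comp (Polynomial.C a * Polynomial.X)).coeff m = a ^ m * p.coeff m := by
  induction p using Polynomial.induction_on' with
  | add p q hp hq => simp [Polynomial.add_comp, hp, hq, mul_add]
  | monomial i c =>
      rw [Polynomial.monomial_comp, mul_pow, ← Polynomial.C_pow, ← mul_assoc,
        ← Polynomial.C_mul]
      simp only [Polynomial.coeff_C_mul, Polynomial.coeff_X_pow, Polynomial.coeff_monomial]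
      by_cases h : i = m
      · subst h; simp [mul_comm]
      · rw [if_neg (fun hh => h hh.symm), if_neg h]; ring

lemma rcbrt_cube {t : ℝ} (ht : 0 < t) : rcbrt (t ^ 3) = t := by
  have h3 : (0:ℝ) < t ^ 3 := by positivity
  rw [rcbrt, Real.sign_of_pos h3, abs_of_pos h3, one_mul]
  rw [← Real.rpow_natCast t 3, ← Real.rpow_mul ht.le]
  norm_num

lemma cube_image {α : ℝ} (hα : 0 < α) :
    Set.Ioo (0:ℝ) (α ^ 3) = (fun t : ℝ => t ^ 3) '' Set.Ioo 0 α := by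
  ext τ
  constructor
  · rintro ⟨h0, h1⟩
    refine ⟨τ ^ ((1:ℝ)/3), ⟨Real.rpow_pos_of_pos h0 _, ?_⟩, ?_⟩
    · have hc : (τ ^ ((1:ℝ)/3)) ^ 3 = τ := by
        rw [← Real.rpow_natCast (τ ^ ((1:ℝ)/3)) 3, ← Real.rpow_mul h0.le]
        norm_num
      have := lt_of_pow_lt_pow_left₀ 3 hα.le (by rw [hc]; exact h1)
      exact this
    · show (τ ^ ((1:ℝ)/3)) ^ 3 = τ
      rw [← Real.rpow_natCast (τ ^ ((1:ℝ)/3)) 3, ← Real.rpow_mul h0.le]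
      norm_num
  · rintro ⟨t, ⟨h0, h1⟩, rfl⟩
    exact ⟨by positivity, pow_lt_pow_left₀ h1 h0.le (by norm_num)⟩



lemma conj_omega_pow_three : (starRingEnd ℂ) ω ^ 3 = 1 := by
  rw [← map_pow, omega_pow_three, map_one]

lemma alg_helper (a w J0 J1 J2 : ℂ) (ha3 : a ^ 3 = 1)
    (h0 : J0 + a * J1 + a ^ 2 * J2 = 0) :
    (J1 - w * J0) + a * (J2 - w * J1) + a ^ 2 * (J0 - w * J2) = 0 := by
  linear_combination (a ^ 2 - w) * h0 - (J1 + a * J2) * ha3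

lemma partA (α : ℝ) (hα : 0 < α) (s₁ : ℝ → ℝ)
    (hs₁pos : ∀ t ∈ Set.Ioo 0 α, 0 ≤ s₁ t)
    (hs₁int : IntervalIntegrable s₁ volume 0 α)
    (hs₁ne : ∫ t in (0:ℝ)..α, s₁ t ≠ 0)
    (n : ℕ) (P : Polynomial ℂ) (hmonic : P.Monic) (hdeg : P.natDegree = n)
    (hK : ∀ k < n, (∑ m ∈ Finset.range 3, (starRingEnd ℂ) ω ^ (m * k) *
        ∫ t in (0:ℝ)..α, P.eval (ω ^ m * (t:ℂ)) * (t:ℂ) ^ k * (s₁ t : ℂ)) = 0) :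
    P.comp (Polynomial.C ω * Polynomial.X) = Polynomial.C (ω ^ n) * P := by
  -- integrability helper
  have hsC : IntervalIntegrable (fun t : ℝ => ((s₁ t : ℝ) : ℂ)) volume 0 α :=
    ⟨Complex.ofRealCLM.integrable_comp hs₁int.1, Complex.ofRealCLM.integrable_comp hs₁int.2⟩
  have hmulInt : ∀ f : ℝ → ℂ, Continuous f →
      IntervalIntegrable (fun t => f t * ((s₁ t : ℝ) : ℂ)) volume 0 α := fun f hf =>
    hsC.continuousOn_mul hf.continuousOn
  by_contra hne
  set Q := P.comp (Polynomial.C ω * Polynomial.X) with hQ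
  set d := Q - Polynomial.C (ω ^ n) * P with hd
  have hdne : d ≠ 0 := sub_ne_zero.mpr hne
  have hP0 : P ≠ 0 := hmonic.ne_zero
  have hωn : ω ^ n ≠ 0 := pow_ne_zero _ omega_ne_zero
  have hQdeg : Q.natDegree = n := by
    rw [hQ, Polynomial.natDegree_comp, Polynomial.natDegree_C_mul_X _ omega_ne_zero, hdeg,
      mul_one]
  have hQlc : Q.leadingCoeff = ω ^ n := by
    rw [hQ, Polynomial.leadingCoeff_comp (by
      rw [Polynomial.natDegree_C_mul_X _ omega_ne_zero]; exact one_ne_zero)]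
    rw [hmonic.leadingCoeff, one_mul, hdeg]
    congr 1
    rw [Polynomial.leadingCoeff_mul, Polynomial.leadingCoeff_C, Polynomial.leadingCoeff_X,
      mul_one]
  have hQ0 : Q ≠ 0 := fun h => hωn (by rw [← hQlc, h, Polynomial.leadingCoeff_zero])
  have hdlt : d.degree < (n : WithBot ℕ) := by
    have h1 : Q.degree = (Polynomial.C (ω ^ n) * P).degree := by
      rw [Polynomial.degree_C_mul hωn, Polynomial.degree_eq_natDegree hQ0,
        Polynomial.degree_eq_natDegree hP0, hQdeg, hdeg]
    have h2 : Q.leadingCoeff = (Polynomial.C (ω ^ n) * P).leadingCoeff := by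
      rw [Polynomial.leadingCoeff_mul, Polynomial.leadingCoeff_C, hmonic.leadingCoeff, mul_one,
        hQlc]
    have := Polynomial.degree_sub_lt h1 hQ0 h2
    rwa [Polynomial.degree_eq_natDegree hQ0, hQdeg] at this
  have hdnat : d.natDegree < n := (Polynomial.natDegree_lt_iff_degree_lt hdne).mpr hdlt
  -- evaluation of d
  have hdev : ∀ m : ℕ, ∀ t : ℝ, d.eval (ω ^ m * (t:ℂ)) =
      P.eval (ω ^ (m + 1) * (t:ℂ)) - ω ^ n * P.eval (ω ^ m * (t:ℂ)) := by
    intro m t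
    have harg : ω * (ω ^ m * (t:ℂ)) = ω ^ (m + 1) * (t:ℂ) := by rw [pow_succ]; ring
    rw [hd, Polynomial.eval_sub, Polynomial.eval_mul, Polynomial.eval_C, hQ,
      Polynomial.eval_comp, Polynomial.eval_mul, Polynomial.eval_C, Polynomial.eval_X, harg]
  -- continuity of relevant maps
  have hcont : ∀ m k : ℕ, Continuous fun t : ℝ => d.eval (ω ^ m * (t:ℂ)) * (t:ℂ) ^ k := by
    intro m k; fun_prop
  have hcontP : ∀ m k : ℕ, Continuous fun t : ℝ => P.eval (ω ^ m * (t:ℂ)) * (t:ℂ) ^ k := by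
    intro m k; fun_prop
  -- split of inner integral
  have hdev' : ∀ m m' : ℕ, ω ^ m' = ω * ω ^ m → ∀ t : ℝ, d.eval (ω ^ m * (t:ℂ)) =
      P.eval (ω ^ m' * (t:ℂ)) - ω ^ n * P.eval (ω ^ m * (t:ℂ)) := by
    intro m m' hm t
    have harg : ω * (ω ^ m * (t:ℂ)) = ω ^ m' * (t:ℂ) := by rw [hm]; ring
    rw [hd, Polynomial.eval_sub, Polynomial.eval_mul, Polynomial.eval_C, hQ,
      Polynomial.eval_comp, Polynomial.eval_mul, Polynomial.eval_C, Polynomial.eval_X, harg]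
  have hDsplit : ∀ m m' k : ℕ, ω ^ m' = ω * ω ^ m →
      (∫ t in (0:ℝ)..α, d.eval (ω ^ m * (t:ℂ)) * (t:ℂ) ^ k * (s₁ t : ℂ)) =
      (∫ t in (0:ℝ)..α, P.eval (ω ^ m' * (t:ℂ)) * (t:ℂ) ^ k * (s₁ t : ℂ)) -
        ω ^ n * ∫ t in (0:ℝ)..α, P.eval (ω ^ m * (t:ℂ)) * (t:ℂ) ^ k * (s₁ t : ℂ) := by
    intro m m' k hm
    rw [← intervalIntegral.integral_const_mul, ← intervalIntegral.integral_sub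
      (hmulInt _ (hcontP m' k)) ((hmulInt _ (hcontP m k)).const_mul (ω ^ n))]
    apply intervalIntegral.integral_congr
    intro t _
    dsimp only
    rw [hdev' m m' hm t]
    ring
  -- the rotated-difference orthogonality
  have hS' : ∀ k, k < n → (∑ m ∈ Finset.range 3, (starRingEnd ℂ) ω ^ (m * k) *
      ∫ t in (0:ℝ)..α, d.eval (ω ^ m * (t:ℂ)) * (t:ℂ) ^ k * (s₁ t : ℂ)) = 0 := by
    intro k hk
    have h0 := hK k hk
    have ha3 : ((starRingEnd ℂ) ω ^ k) ^ 3 = 1 := by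
      rw [← pow_mul, mul_comm, pow_mul, conj_omega_pow_three, one_pow]
    have h2k : (starRingEnd ℂ) ω ^ (2 * k) = ((starRingEnd ℂ) ω ^ k) ^ 2 := by
      rw [← pow_mul, mul_comm]
    simp only [Finset.sum_range_succ, Finset.sum_range_zero, zero_add] at h0 ⊢
    rw [hDsplit 0 1 k (by rw [pow_zero, pow_one, mul_one]),
      hDsplit 1 2 k (by ring),
      hDsplit 2 0 k (by rw [pow_zero, ← omega_pow_three]; ring)]
    simp only [Nat.zero_mul, Nat.one_mul, h2k, pow_zero ((starRingEnd ℂ) ω), one_mul] at h0 ⊢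
    exact alg_helper _ _ _ _ _ ha3 h0
  -- conj expansion of d
  have hconjd : ∀ w : ℂ, (starRingEnd ℂ) (d.eval w) =
      ∑ k ∈ Finset.range n, (starRingEnd ℂ) (d.coeff k) * ((starRingEnd ℂ) w) ^ k := by
    intro w
    rw [Polynomial.eval_eq_sum_range' hdnat, map_sum]
    exact Finset.sum_congr rfl fun k _ => by rw [map_mul, map_pow]
  -- E_m expansion
  have hEm : ∀ m : ℕ,
      (∫ t in (0:ℝ)..α, d.eval (ω ^ m * (t:ℂ)) * (starRingEnd ℂ) (d.eval (ω ^ m * (t:ℂ))) *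
        (s₁ t : ℂ)) =
      ∑ k ∈ Finset.range n, (starRingEnd ℂ) (d.coeff k) * ((starRingEnd ℂ) ω ^ (m * k) *
        ∫ t in (0:ℝ)..α, d.eval (ω ^ m * (t:ℂ)) * (t:ℂ) ^ k * (s₁ t : ℂ)) := by
    intro m
    have step1 : (∫ t in (0:ℝ)..α, d.eval (ω ^ m * (t:ℂ)) *
        (starRingEnd ℂ) (d.eval (ω ^ m * (t:ℂ))) * (s₁ t : ℂ)) =
        ∫ t in (0:ℝ)..α, ∑ k ∈ Finset.range n,
          ((starRingEnd ℂ) (d.coeff k) * (starRingEnd ℂ) ω ^ (m * k)) *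
            (d.eval (ω ^ m * (t:ℂ)) * (t:ℂ) ^ k * (s₁ t : ℂ)) := by
      apply intervalIntegral.integral_congr
      intro t _
      dsimp only
      rw [hconjd]
      have hcw : (starRingEnd ℂ) (ω ^ m * (t:ℂ)) = (starRingEnd ℂ) ω ^ m * (t:ℂ) := by
        rw [map_mul, map_pow, Complex.conj_ofReal]
      rw [hcw, Finset.mul_sum, Finset.sum_mul]
      apply Finset.sum_congr rfl
      intro k _
      rw [mul_pow, ← pow_mul]
      ring
    rw [step1, intervalIntegral.integral_finset_sum]
    · apply Finset.sum_congr rfl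
      intro k _
      rw [intervalIntegral.integral_const_mul]
      ring
    · intro k _
      have := (hmulInt _ (hcont m k)).const_mul
        ((starRingEnd ℂ) (d.coeff k) * (starRingEnd ℂ) ω ^ (m * k))
      simpa [mul_assoc] using this
  -- grand sum is zero
  have hEsum : (∑ m ∈ Finset.range 3, ∫ t in (0:ℝ)..α,
      d.eval (ω ^ m * (t:ℂ)) * (starRingEnd ℂ) (d.eval (ω ^ m * (t:ℂ))) * (s₁ t : ℂ)) = 0 := by
    calc (∑ m ∈ Finset.range 3, ∫ t in (0:ℝ)..α,
        d.eval (ω ^ m * (t:ℂ)) * (starRingEnd ℂ) (d.eval (ω ^ m * (t:ℂ))) * (s₁ t : ℂ))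
        = ∑ m ∈ Finset.range 3, ∑ k ∈ Finset.range n,
            (starRingEnd ℂ) (d.coeff k) * ((starRingEnd ℂ) ω ^ (m * k) *
            ∫ t in (0:ℝ)..α, d.eval (ω ^ m * (t:ℂ)) * (t:ℂ) ^ k * (s₁ t : ℂ)) := by
          exact Finset.sum_congr rfl fun m _ => hEm m
      _ = ∑ k ∈ Finset.range n, (starRingEnd ℂ) (d.coeff k) *
            ∑ m ∈ Finset.range 3, (starRingEnd ℂ) ω ^ (m * k) *
            ∫ t in (0:ℝ)..α, d.eval (ω ^ m * (t:ℂ)) * (t:ℂ) ^ k * (s₁ t : ℂ) := by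
          rw [Finset.sum_comm]
          exact Finset.sum_congr rfl fun k _ => by rw [Finset.mul_sum]
      _ = 0 := by
          apply Finset.sum_eq_zero
          intro k hk
          rw [hS' k (Finset.mem_range.mp hk), mul_zero]
  -- each term is a nonnegative real
  have hEreal : ∀ m : ℕ,
      (∫ t in (0:ℝ)..α, d.eval (ω ^ m * (t:ℂ)) * (starRingEnd ℂ) (d.eval (ω ^ m * (t:ℂ))) *
        (s₁ t : ℂ)) =
      ((∫ t in (0:ℝ)..α, Complex.normSq (d.eval (ω ^ m * (t:ℂ))) * s₁ t : ℝ) : ℂ) := by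
    intro m
    rw [← intervalIntegral.integral_ofReal]
    apply intervalIntegral.integral_congr
    intro t _
    dsimp only
    rw [Complex.mul_conj]
    push_cast
    ring
  have hrnn : ∀ m : ℕ, 0 ≤ ∫ t in (0:ℝ)..α, Complex.normSq (d.eval (ω ^ m * (t:ℂ))) * s₁ t := by
    intro m
    rw [intervalIntegral.integral_of_le hα.le, MeasureTheory.integral_Ioc_eq_integral_Ioo]
    apply MeasureTheory.setIntegral_nonneg measurableSet_Ioo
    intro t ht
    exact mul_nonneg (Complex.normSq_nonneg _) (hs₁pos t ht)
  have hrsum : (∫ t in (0:ℝ)..α, Complex.normSq (d.eval (ω ^ 0 * (t:ℂ))) * s₁ t) +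
      (∫ t in (0:ℝ)..α, Complex.normSq (d.eval (ω ^ 1 * (t:ℂ))) * s₁ t) +
      (∫ t in (0:ℝ)..α, Complex.normSq (d.eval (ω ^ 2 * (t:ℂ))) * s₁ t) = 0 := by
    have := hEsum
    simp only [Finset.sum_range_succ, Finset.sum_range_zero, zero_add, hEreal] at this
    exact_mod_cast this
  have hr0 : (∫ t in (0:ℝ)..α, Complex.normSq (d.eval (ω ^ 0 * (t:ℂ))) * s₁ t) = 0 := by
    have h0 := hrnn 0; have h1 := hrnn 1; have h2 := hrnn 2
    linarith
  -- conclude s₁ = 0 a.e. on Ioo 0 α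
  have hintf : IntegrableOn (fun t : ℝ => Complex.normSq (d.eval (ω ^ 0 * (t:ℂ))) * s₁ t)
      (Ioo 0 α) volume := by
    have hci : Continuous fun t : ℝ => Complex.normSq (d.eval (ω ^ 0 * (t:ℂ))) :=
      Complex.continuous_normSq.comp (by fun_prop)
    exact ((hs₁int.continuousOn_mul hci.continuousOn).1).mono_set Set.Ioo_subset_Ioc_self
  have hfnn : 0 ≤ᵐ[volume.restrict (Ioo 0 α)]
      fun t : ℝ => Complex.normSq (d.eval (ω ^ 0 * (t:ℂ))) * s₁ t := by
    filter_upwards [MeasureTheory.ae_restrict_mem measurableSet_Ioo] with t ht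
    simp only [Pi.zero_apply]
    exact mul_nonneg (Complex.normSq_nonneg _) (hs₁pos t ht)
  have hzero : (∫ t in Ioo (0:ℝ) α, Complex.normSq (d.eval (ω ^ 0 * (t:ℂ))) * s₁ t) = 0 := by
    rw [← MeasureTheory.integral_Ioc_eq_integral_Ioo, ← intervalIntegral.integral_of_le hα.le]
    exact hr0
  have hae : (fun t : ℝ => Complex.normSq (d.eval (ω ^ 0 * (t:ℂ))) * s₁ t)
      =ᵐ[volume.restrict (Ioo 0 α)] 0 :=
    (MeasureTheory.integral_eq_zero_iff_of_nonneg_ae hfnn hintf).mp hzero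
  have hZfin : ({t : ℝ | d.eval ((t:ℝ) : ℂ) = 0}).Finite := by
    have h1 : Set.Finite {z : ℂ | d.IsRoot z} := Polynomial.finite_setOf_isRoot hdne
    have h2 : {t : ℝ | d.eval ((t:ℝ) : ℂ) = 0} =
        (fun t : ℝ => (t : ℂ)) ⁻¹' {z : ℂ | d.IsRoot z} := rfl
    rw [h2]
    exact Set.Finite.preimage (Complex.ofReal_injective.injOn) h1
  have hZ0 : volume {t : ℝ | d.eval ((t:ℝ) : ℂ) = 0} = 0 := hZfin.measure_zero _
  have haez : ∀ᵐ t ∂volume.restrict (Ioo 0 α), d.eval ((t:ℝ) : ℂ) ≠ 0 :=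
    MeasureTheory.ae_restrict_of_ae (MeasureTheory.measure_eq_zero_iff_ae_notMem.mp hZ0)
  have hs0 : s₁ =ᵐ[volume.restrict (Ioo 0 α)] 0 := by
    filter_upwards [hae, haez] with t h1 h2
    have hω0 : ω ^ 0 * (t : ℂ) = (t : ℂ) := by rw [pow_zero, one_mul]
    rw [hω0] at h1
    rcases mul_eq_zero.mp h1 with h | h
    · exact absurd (Complex.normSq_eq_zero.mp h) h2
    · exact h
  apply hs₁ne
  rw [intervalIntegral.integral_of_le hα.le, MeasureTheory.integral_Ioc_eq_integral_Ioo,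
    MeasureTheory.integral_congr_ae hs0]
  simp


lemma build_q (P : Polynomial ℂ) (k e : ℕ) (he : e < 3) (hmonic : P.Monic)
    (hdeg : P.natDegree = 3 * k + e)
    (hcoeff : ∀ m, m % 3 ≠ e → P.coeff m = 0) :
    ∃ q : Polynomial ℂ, q.Monic ∧ q.natDegree = k ∧
      ∀ z : ℂ, P.eval z = z ^ e * q.eval (z ^ 3) := by
  set q : Polynomial ℂ :=
    ∑ j ∈ Finset.range (k + 1), Polynomial.C (P.coeff (3 * j + e)) * Polynomial.X ^ j with hq
  have hqc : ∀ j, j ≤ k → q.coeff j = P.coeff (3 * j + e) := by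
    intro j hj
    rw [hq, Polynomial.finset_sum_coeff]
    rw [Finset.sum_eq_single j]
    · rw [Polynomial.coeff_C_mul, Polynomial.coeff_X_pow, if_pos rfl, mul_one]
    · intro i _ hij
      rw [Polynomial.coeff_C_mul, Polynomial.coeff_X_pow, if_neg (fun h => hij h.symm), mul_zero]
    · intro hj'
      exact absurd (Finset.mem_range.mpr (Nat.lt_succ_of_le hj)) hj'
  have hqk : q.coeff k = 1 := by
    rw [hqc k le_rfl, ← hdeg]
    exact hmonic.coeff_natDegree
  have hdle : q.natDegree ≤ k := by
    apply Polynomial.natDegree_sum_le_of_forall_le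
    intro j hj
    exact le_trans (Polynomial.natDegree_C_mul_le _ _)
      (by rw [Polynomial.natDegree_X_pow]; exact Nat.lt_succ_iff.mp (Finset.mem_range.mp hj))
  have hqmonic : q.Monic := Polynomial.monic_of_natDegree_le_of_coeff_eq_one k hdle hqk
  have hqdeg : q.natDegree = k :=
    le_antisymm hdle (Polynomial.le_natDegree_of_ne_zero (hqk ▸ one_ne_zero))
  refine ⟨q, hqmonic, hqdeg, fun z => ?_⟩
  have hinj : ∀ a ∈ Finset.range (k+1), ∀ b ∈ Finset.range (k+1),
      3 * a + e = 3 * b + e → a = b := fun a _ b _ h => by omega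
  calc P.eval z = ∑ m ∈ Finset.range (3 * k + e + 1), P.coeff m * z ^ m := by
        rw [Polynomial.eval_eq_sum_range, hdeg]
    _ = ∑ m ∈ (Finset.range (k + 1)).image (fun j => 3 * j + e), P.coeff m * z ^ m := by
        apply (Finset.sum_subset ?_ ?_).symm
        · intro m hm
          obtain ⟨j, hj, rfl⟩ := Finset.mem_image.mp hm
          have := Finset.mem_range.mp hj
          exact Finset.mem_range.mpr (by omega)
        · intro m hm hnm
          by_cases hme : m % 3 = e
          · exfalso
            apply hnm
            have hmr := Finset.mem_range.mp hm
            refine Finset.mem_image.mpr ⟨(m - e) / 3, Finset.mem_range.mpr (by omega), by omega⟩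
          · rw [hcoeff m hme, zero_mul]
    _ = ∑ j ∈ Finset.range (k + 1), P.coeff (3 * j + e) * z ^ (3 * j + e) :=
        Finset.sum_image hinj
    _ = z ^ e * q.eval (z ^ 3) := by
        rw [hq, Polynomial.eval_finset_sum, Finset.mul_sum]
        apply Finset.sum_congr rfl
        intro j _
        rw [Polynomial.eval_mul, Polynomial.eval_C, Polynomial.eval_pow, Polynomial.eval_X,
          pow_add, pow_mul]
        ring

lemma cube_subst (α : ℝ) (hα : 0 < α) (f : ℝ → ℂ) :
    ∫ τ in (0:ℝ)..(α ^ 3), f τ = ∫ t in Set.Ioo 0 α, |3 * t ^ 2| • f (t ^ 3) := by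
  have himg : Set.Ioo (0:ℝ) (α ^ 3) = (fun t : ℝ => t ^ 3) '' Set.Ioo 0 α := by
    ext τ
    constructor
    · rintro ⟨h0, h1⟩
      refine ⟨τ ^ ((1:ℝ)/3), ⟨Real.rpow_pos_of_pos h0 _, ?_⟩, ?_⟩
      · have hc : (τ ^ ((1:ℝ)/3)) ^ 3 = τ := by
          rw [← Real.rpow_natCast (τ ^ ((1:ℝ)/3)) 3, ← Real.rpow_mul h0.le]
          norm_num
        exact lt_of_pow_lt_pow_left₀ 3 hα.le (by rw [hc]; exact h1)
      · show (τ ^ ((1:ℝ)/3)) ^ 3 = τ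
        rw [← Real.rpow_natCast (τ ^ ((1:ℝ)/3)) 3, ← Real.rpow_mul h0.le]
        norm_num
    · rintro ⟨t, ⟨h0, h1⟩, rfl⟩
      exact ⟨by positivity, pow_lt_pow_left₀ h1 h0.le (by norm_num)⟩
  have hderiv : ∀ x ∈ Set.Ioo (0:ℝ) α, HasDerivWithinAt (fun t : ℝ => t ^ 3)
      (3 * x ^ 2) (Set.Ioo 0 α) x := by
    intro x _
    have h := (hasDerivAt_pow 3 x).hasDerivWithinAt (s := Set.Ioo (0:ℝ) α)
    have h3 : ((3:ℕ):ℝ) * x ^ (3 - 1) = 3 * x ^ 2 := by norm_num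
    rwa [h3] at h
  have hinj : Set.InjOn (fun t : ℝ => t ^ 3) (Set.Ioo 0 α) := by
    intro x hx y hy h
    rcases lt_trichotomy x y with hlt | heq | hlt
    · exact absurd h (ne_of_lt (pow_lt_pow_left₀ hlt hx.1.le (by norm_num)))
    · exact heq
    · exact absurd h.symm (ne_of_lt (pow_lt_pow_left₀ hlt hy.1.le (by norm_num)))
  rw [intervalIntegral.integral_of_le (by positivity : (0:ℝ) ≤ α ^ 3),
    MeasureTheory.integral_Ioc_eq_integral_Ioo, himg,
    MeasureTheory.integral_image_eq_integral_abs_deriv_smul measurableSet_Ioo hderiv hinj]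


/-- Let `lam1` be the rotationally invariant positive measure on the
star `S₀` whose restriction to `[0,α]` is `s₁(x)dx` (encoded by the integral
representation hypothesis `hrep`), and let `π_n` be its `n`-th monic orthogonal
polynomial.  Then `π_n(ωz) = ωⁿ π_n(z)`, and the polynomials
`π_{3k}(τ^{1/3})`, `π_{3k+1}(τ^{1/3})/τ^{1/3}`, `π_{3k+2}(τ^{1/3})/τ^{2/3}`
are the monic orthogonal polynomials of degree `k` with respect to
`s₁(τ^{1/3})τ^{-2/3}dτ`, `s₁(τ^{1/3})dτ`, `s₁(τ^{1/3})τ^{2/3}dτ` on `[0,α³]`. -/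
theorem statement17 (α : ℝ) (hα : 0 < α) (s₁ : ℝ → ℝ)
    (hs₁pos : ∀ t ∈ Set.Ioo 0 α, 0 ≤ s₁ t)
    (hs₁int : IntervalIntegrable s₁ volume 0 α)
    (hs₁ne : ∫ t in (0:ℝ)..α, s₁ t ≠ 0)
    (lam1 : Measure ℂ) [IsFiniteMeasure lam1]
    (hrep : ∀ g : ℂ → ℂ, Continuous g →
      ∫ z, g z ∂lam1 =
        ∑ k ∈ Finset.range 3, ∫ t in (0:ℝ)..α, g (ω ^ k * (t : ℂ)) * (s₁ t : ℂ))
    (π : ℕ → Polynomial ℂ)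
    (hmonic : ∀ n, (π n).Monic) (hdeg : ∀ n, (π n).natDegree = n)
    (horth : ∀ n, ∀ k < n, ∫ z, (π n).eval z * starRingEnd ℂ (z ^ k) ∂lam1 = 0) :
    (∀ n : ℕ, ∀ z : ℂ, (π n).eval (ω * z) = ω ^ n * (π n).eval z) ∧
    (∀ k : ℕ,
      -- π_{3k}(τ^{1/3}) : monic OP of degree k for s₁(τ^{1/3}) τ^{-2/3} dτ
      (∃ q : Polynomial ℂ, q.Monic ∧ q.natDegree = k ∧
        (∀ z : ℂ, (π (3 * k)).eval z = q.eval (z ^ 3)) ∧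
        (∀ j < k, ∫ τ in (0:ℝ)..(α ^ 3),
          q.eval (τ : ℂ) * (τ : ℂ) ^ j * ((s₁ (rcbrt τ) / (rcbrt τ) ^ 2 : ℝ) : ℂ) = 0)) ∧
      -- π_{3k+1}(τ^{1/3})/τ^{1/3} : monic OP of degree k for s₁(τ^{1/3}) dτ
      (∃ q : Polynomial ℂ, q.Monic ∧ q.natDegree = k ∧
        (∀ z : ℂ, (π (3 * k + 1)).eval z = z * q.eval (z ^ 3)) ∧
        (∀ j < k, ∫ τ in (0:ℝ)..(α ^ 3),
          q.eval (τ : ℂ) * (τ : ℂ) ^ j * ((s₁ (rcbrt τ) : ℝ) : ℂ) = 0)) ∧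
      -- π_{3k+2}(τ^{1/3})/τ^{2/3} : monic OP of degree k for s₁(τ^{1/3}) τ^{2/3} dτ
      (∃ q : Polynomial ℂ, q.Monic ∧ q.natDegree = k ∧
        (∀ z : ℂ, (π (3 * k + 2)).eval z = z ^ 2 * q.eval (z ^ 3)) ∧
        (∀ j < k, ∫ τ in (0:ℝ)..(α ^ 3),
          q.eval (τ : ℂ) * (τ : ℂ) ^ j * ((s₁ (rcbrt τ) * (rcbrt τ) ^ 2 : ℝ) : ℂ) = 0))) := by
  -- Step 1: the rotated orthogonality sums
  have hK : ∀ n : ℕ, ∀ k, k < n → (∑ m ∈ Finset.range 3, (starRingEnd ℂ) ω ^ (m * k) *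
      ∫ t in (0:ℝ)..α, (π n).eval (ω ^ m * (t:ℂ)) * (t:ℂ) ^ k * (s₁ t : ℂ)) = 0 := by
    intro n k hk
    have hgc : Continuous fun z : ℂ => (π n).eval z * (starRingEnd ℂ) (z ^ k) :=
      ((π n).continuous).mul (Complex.continuous_conj.comp (continuous_pow k))
    have h0 := (hrep _ hgc).symm.trans (horth n k hk)
    calc (∑ m ∈ Finset.range 3, (starRingEnd ℂ) ω ^ (m * k) *
        ∫ t in (0:ℝ)..α, (π n).eval (ω ^ m * (t:ℂ)) * (t:ℂ) ^ k * (s₁ t : ℂ))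
        = ∑ m ∈ Finset.range 3, ∫ t in (0:ℝ)..α,
            (fun z : ℂ => (π n).eval z * (starRingEnd ℂ) (z ^ k)) (ω ^ m * (t:ℂ)) *
              (s₁ t : ℂ) := by
          apply Finset.sum_congr rfl
          intro m _
          rw [← intervalIntegral.integral_const_mul]
          apply intervalIntegral.integral_congr
          intro t _
          dsimp only
          rw [map_pow, map_mul, map_pow, Complex.conj_ofReal, mul_pow, ← pow_mul]
          ring
      _ = 0 := h0
  -- Step 2: polynomial functional equation
  have hcompeq : ∀ n : ℕ, (π n).comp (Polynomial.C ω * Polynomial.X) =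
      Polynomial.C (ω ^ n) * π n := fun n =>
    partA α hα s₁ hs₁pos hs₁int hs₁ne n (π n) (hmonic n) (hdeg n) (fun k hk => hK n k hk)
  have hA : ∀ n : ℕ, ∀ z : ℂ, (π n).eval (ω * z) = ω ^ n * (π n).eval z := by
    intro n z
    have h := congrArg (Polynomial.eval z) (hcompeq n)
    simpa [Polynomial.eval_comp] using h
  have hAm : ∀ n m : ℕ, ∀ z : ℂ, (π n).eval (ω ^ m * z) = ω ^ (m * n) * (π n).eval z := by
    intro n m
    induction m with
    | zero => intro z; simp
    | succ m ih =>
        intro z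
        have h1 : ω ^ (m + 1) * z = ω * (ω ^ m * z) := by rw [pow_succ]; ring
        rw [h1, hA n (ω ^ m * z), ih z, Nat.succ_mul, pow_add]
        ring
  have hcoeff : ∀ n m : ℕ, m % 3 ≠ n % 3 → (π n).coeff m = 0 := by
    intro n m hm
    have h := congrArg (fun p : Polynomial ℂ => p.coeff m) (hcompeq n)
    simp only [coeff_comp_C_mul_X, Polynomial.coeff_C_mul] at h
    by_contra hc
    have h2 : ω ^ m = ω ^ n := mul_right_cancel₀ hc h
    rw [omega_pow_mod m, omega_pow_mod n] at h2
    exact hm (omega_pow_inj (Nat.mod_lt _ (by norm_num)) (Nat.mod_lt _ (by norm_num)) h2)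
  -- Step 3: orthogonality on the real segment
  have Torth : ∀ n r : ℕ, r < n → r % 3 = n % 3 →
      (∫ t in (0:ℝ)..α, (π n).eval ((t:ℝ):ℂ) * (t:ℂ) ^ r * (s₁ t : ℂ)) = 0 := by
    intro n r hrn hmod
    have h0 := hK n r hrn
    have hterm : ∀ m : ℕ, (starRingEnd ℂ) ω ^ (m * r) *
        (∫ t in (0:ℝ)..α, (π n).eval (ω ^ m * (t:ℂ)) * (t:ℂ) ^ r * (s₁ t : ℂ)) =
        ∫ t in (0:ℝ)..α, (π n).eval ((t:ℝ):ℂ) * (t:ℂ) ^ r * (s₁ t : ℂ) := by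
      intro m
      have h1 : (∫ t in (0:ℝ)..α, (π n).eval (ω ^ m * (t:ℂ)) * (t:ℂ) ^ r * (s₁ t : ℂ)) =
          ω ^ (m * n) * ∫ t in (0:ℝ)..α, (π n).eval ((t:ℝ):ℂ) * (t:ℂ) ^ r * (s₁ t : ℂ) := by
        rw [← intervalIntegral.integral_const_mul]
        apply intervalIntegral.integral_congr
        intro t _
        dsimp only
        rw [hAm n m ((t:ℝ):ℂ)]
        ring
      rw [h1, conj_omega, ← pow_mul, ← mul_assoc, ← pow_add]
      have h2 : 2 * (m * r) + m * n = m * (2 * r + n) := by ring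
      rw [h2, omega_pow_eq_one (Dvd.dvd.mul_left (show 3 ∣ 2 * r + n by omega) m), one_mul]
    simp only [Finset.sum_range_succ, Finset.sum_range_zero, zero_add] at h0
    rw [hterm 0, hterm 1, hterm 2] at h0
    have h3 : (3:ℂ) * (∫ t in (0:ℝ)..α, (π n).eval ((t:ℝ):ℂ) * (t:ℂ) ^ r * (s₁ t : ℂ)) = 0 := by
      linear_combination h0
    exact (mul_eq_zero.mp h3).resolve_left (by norm_num)
  refine ⟨hA, fun k => ⟨?_, ?_, ?_⟩⟩
  -- case n = 3k
  · obtain ⟨q, hqm, hqd, heval⟩ := build_q (π (3 * k)) k 0 (by norm_num) (hmonic _)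
      (by simp [hdeg]) (fun m hm => hcoeff _ m (by omega))
    have heval0 : ∀ z : ℂ, (π (3 * k)).eval z = q.eval (z ^ 3) := fun z => by
      simpa using heval z
    refine ⟨q, hqm, hqd, heval0, ?_⟩
    intro j hj
    have hT := Torth (3 * k) (3 * j) (by omega) (by omega)
    have hpt : Set.EqOn
        (fun t : ℝ => |3 * t ^ 2| •
          ((fun τ : ℝ => q.eval ((τ:ℝ):ℂ) * ((τ:ℝ):ℂ) ^ j *
            ((s₁ (rcbrt τ) / (rcbrt τ) ^ 2 : ℝ) : ℂ)) (t ^ 3)))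
        (fun t : ℝ => (3:ℂ) *
          ((π (3 * k)).eval ((t:ℝ):ℂ) * ((t:ℝ):ℂ) ^ (3 * j) * (s₁ t : ℂ)))
        (Set.Ioo 0 α) := by
      intro t ht
      dsimp only
      have ht0 : ((t:ℝ):ℂ) ≠ 0 := Complex.ofReal_ne_zero.mpr (ne_of_gt ht.1)
      rw [rcbrt_cube ht.1, abs_of_pos (mul_pos (by norm_num) (pow_pos ht.1 2) : (0:ℝ) < 3 * t ^ 2),
        heval0 ((t:ℝ):ℂ), Complex.real_smul]
      push_cast
      field_simp
      ring
    refine (cube_subst α hα _).trans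
      ((MeasureTheory.setIntegral_congr_fun measurableSet_Ioo hpt).trans ?_)
    rw [MeasureTheory.integral_const_mul, ← MeasureTheory.integral_Ioc_eq_integral_Ioo,
      ← intervalIntegral.integral_of_le hα.le, hT, mul_zero]
  -- case n = 3k+1
  · obtain ⟨q, hqm, hqd, heval⟩ := build_q (π (3 * k + 1)) k 1 (by norm_num) (hmonic _)
      (by simp [hdeg]) (fun m hm => hcoeff _ m (by omega))
    have heval1 : ∀ z : ℂ, (π (3 * k + 1)).eval z = z * q.eval (z ^ 3) := fun z => by
      simpa using heval z
    refine ⟨q, hqm, hqd, heval1, ?_⟩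
    intro j hj
    have hT := Torth (3 * k + 1) (3 * j + 1) (by omega) (by omega)
    have hpt : Set.EqOn
        (fun t : ℝ => |3 * t ^ 2| •
          ((fun τ : ℝ => q.eval ((τ:ℝ):ℂ) * ((τ:ℝ):ℂ) ^ j *
            ((s₁ (rcbrt τ) : ℝ) : ℂ)) (t ^ 3)))
        (fun t : ℝ => (3:ℂ) *
          ((π (3 * k + 1)).eval ((t:ℝ):ℂ) * ((t:ℝ):ℂ) ^ (3 * j + 1) * (s₁ t : ℂ)))
        (Set.Ioo 0 α) := by
      intro t ht
      dsimp only
      rw [rcbrt_cube ht.1, abs_of_pos (mul_pos (by norm_num) (pow_pos ht.1 2) : (0:ℝ) < 3 * t ^ 2),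
        heval1 ((t:ℝ):ℂ), Complex.real_smul]
      push_cast
      ring
    refine (cube_subst α hα _).trans
      ((MeasureTheory.setIntegral_congr_fun measurableSet_Ioo hpt).trans ?_)
    rw [MeasureTheory.integral_const_mul, ← MeasureTheory.integral_Ioc_eq_integral_Ioo,
      ← intervalIntegral.integral_of_le hα.le, hT, mul_zero]
  -- case n = 3k+2
  · obtain ⟨q, hqm, hqd, heval⟩ := build_q (π (3 * k + 2)) k 2 (by norm_num) (hmonic _)
      (by simp [hdeg]) (fun m hm => hcoeff _ m (by omega))
    have heval2 : ∀ z : ℂ, (π (3 * k + 2)).eval z = z ^ 2 * q.eval (z ^ 3) := fun z => by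
      simpa using heval z
    refine ⟨q, hqm, hqd, heval2, ?_⟩
    intro j hj
    have hT := Torth (3 * k + 2) (3 * j + 2) (by omega) (by omega)
    have hpt : Set.EqOn
        (fun t : ℝ => |3 * t ^ 2| •
          ((fun τ : ℝ => q.eval ((τ:ℝ):ℂ) * ((τ:ℝ):ℂ) ^ j *
            ((s₁ (rcbrt τ) * (rcbrt τ) ^ 2 : ℝ) : ℂ)) (t ^ 3)))
        (fun t : ℝ => (3:ℂ) *
          ((π (3 * k + 2)).eval ((t:ℝ):ℂ) * ((t:ℝ):ℂ) ^ (3 * j + 2) * (s₁ t : ℂ)))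
        (Set.Ioo 0 α) := by
      intro t ht
      dsimp only
      rw [rcbrt_cube ht.1, abs_of_pos (mul_pos (by norm_num) (pow_pos ht.1 2) : (0:ℝ) < 3 * t ^ 2),
        heval2 ((t:ℝ):ℂ), Complex.real_smul]
      push_cast
      ring
    refine (cube_subst α hα _).trans
      ((MeasureTheory.setIntegral_congr_fun measurableSet_Ioo hpt).trans ?_)
    rw [MeasureTheory.integral_const_mul, ← MeasureTheory.integral_Ioc_eq_integral_Ioo,
      ← intervalIntegral.integral_of_le hα.le, hT, mul_zero]


end
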